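/- Every component of the subgraph of G induced by D(G), the set of vertices missed by at least one maximum matching, is factor-critical: for each such component H and each vertex v of H, the graph H − v has a perfect matching. -/

import Mathlib

/-- `M` is a maximum matching of `G` (a matching covering the most vertices). -/
def IsMaxMatching {V : Type*} (G : SimpleGraph V) (M : G.Subgraph) : Prop :=
  M.IsMatching ∧ ∀ N : G.Subgraph, N.IsMatching → N.support.ncard ≤ M.support.ncard

/-- `D(G)`: the set of vertices missed by at least one maximum matching of `G`. -/
def Dset {V : Type*} (G : SimpleGraph V) : Set V :=
  {v | ∃ M : G.Subgraph, IsMaxMatching G M ∧ v ∉ M.support}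

namespace GE

attribute [local instance] Classical.propDecidable

variable {V : Type*}

/-- Matchings as involutions. -/
def IsIM (G : SimpleGraph V) (m : V → V) : Prop :=
  Function.Involutive m ∧ ∀ v, m v ≠ v → G.Adj v (m v)

def msupp (m : V → V) : Set V := {v | m v ≠ v}

noncomputable def scard (m : V → V) : ℕ := (msupp m).ncard

def MaxIM (G : SimpleGraph V) (m : V → V) : Prop :=
  IsIM G m ∧ ∀ n, IsIM G n → scard n ≤ scard m

def Dv (G : SimpleGraph V) : Set V := {v | ∃ m, MaxIM G m ∧ m v = v}

/-- Restriction of a graph to a vertex set (as a graph on the same vertex type). -/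
def Gres (G : SimpleGraph V) (s : Set V) : SimpleGraph V where
  Adj x y := G.Adj x y ∧ x ∈ s ∧ y ∈ s
  symm := by constructor; rintro x y ⟨h, hx, hy⟩; exact ⟨h.symm, hy, hx⟩
  loopless := by constructor; rintro x ⟨h, _⟩; exact G.loopless.irrefl x h

lemma Gres_le {G : SimpleGraph V} {s : Set V} : Gres G s ≤ G := fun _ _ h => h.1

lemma Gres_adj {G : SimpleGraph V} {s : Set V} {x y : V} :
    (Gres G s).Adj x y ↔ G.Adj x y ∧ x ∈ s ∧ y ∈ s := Iff.rfl

/-- Deletion of a vertex (keeping it as an isolated vertex). -/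
def Gdel (G : SimpleGraph V) (a : V) : SimpleGraph V := Gres G {x | x ≠ a}

lemma Gdel_adj {G : SimpleGraph V} {a x y : V} :
    (Gdel G a).Adj x y ↔ G.Adj x y ∧ x ≠ a ∧ y ≠ a := Iff.rfl

lemma isIM_id (G : SimpleGraph V) : IsIM G id :=
  ⟨fun _ => rfl, fun v h => absurd rfl h⟩

lemma IsIM.mono {G H : SimpleGraph V} (hGH : G ≤ H) {m : V → V} (h : IsIM G m) : IsIM H m :=
  ⟨h.1, fun v hv => hGH (h.2 v hv)⟩

lemma msupp_finite [Fintype V] (m : V → V) : (msupp m).Finite := Set.toFinite _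

lemma mem_msupp {m : V → V} {v : V} : v ∈ msupp m ↔ m v ≠ v := Iff.rfl

lemma msupp_mem_of_inv {m : V → V} (hm : Function.Involutive m) {v : V}
    (hv : v ∈ msupp m) : m v ∈ msupp m := by
  simp only [mem_msupp] at *
  intro h
  exact hv ((hm v).symm.trans h).symm

/-- The support of an involution has even cardinality. -/
lemma even_ncard_of_inv [Fintype V] {m : V → V} (hm : Function.Involutive m)
    {s : Set V} (hs : ∀ x ∈ s, m x ∈ s ∧ m x ≠ x) : Even s.ncard := by
  classical
  generalize hn : s.ncard = n
  induction n using Nat.strong_induction_on generalizing s with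
  | _ n ih =>
    rcases s.eq_empty_or_nonempty with rfl | ⟨v, hv⟩
    · simp [← hn]
    · have hfin : s.Finite := Set.toFinite _
      have hmv : m v ∈ s ∧ m v ≠ v := hs v hv
      set s' : Set V := s \ {v, m v} with hs'
      have hsub : s' ⊆ s := Set.diff_subset
      have h2 : ({v, m v} : Set V) ⊆ s := by
        intro x hx; rcases hx with rfl | hx
        · exact hv
        · rw [Set.mem_singleton_iff] at hx; subst hx; exact hmv.1
      have h2c : ({v, m v} : Set V).ncard = 2 := Set.ncard_pair (Ne.symm hmv.2)
      have hle : 2 ≤ s.ncard := h2c ▸ Set.ncard_le_ncard h2 hfin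
      have hcard : s'.ncard = s.ncard - 2 := by
        rw [hs', Set.ncard_diff h2, h2c]
      have hlt : s'.ncard < n := by omega
      have hev : Even s'.ncard := by
        refine ih _ hlt (s := s') ?_ rfl
        intro x hx
        have hxs : x ∈ s := hsub hx
        have h1 := hs x hxs
        refine ⟨⟨h1.1, ?_⟩, h1.2⟩
        simp only [hs', Set.mem_diff, Set.mem_insert_iff, Set.mem_singleton_iff] at hx ⊢
        push_neg at hx ⊢
        constructor
        · intro h; apply hx.2.2; rw [← hm x, h]
        · intro h; apply hx.2.1; rw [← hm x, h, hm]
      obtain ⟨k, hk⟩ := hev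
      exact ⟨k + 1, by omega⟩

lemma scard_even [Fintype V] {m : V → V} (hm : Function.Involutive m) : Even (scard m) :=
  even_ncard_of_inv hm (fun x hx => ⟨msupp_mem_of_inv hm hx, hx⟩)

lemma exists_maxIM [Fintype V] (G : SimpleGraph V) : ∃ m, MaxIM G m := by
  classical
  set S : Set ℕ := scard '' {m | IsIM G m} with hS
  have hne : S.Nonempty := ⟨scard (id : V → V), ⟨id, isIM_id G, rfl⟩⟩
  have hbdd : BddAbove S := by
    refine ⟨Fintype.card V, ?_⟩
    rintro n ⟨m, _, rfl⟩
    exact le_trans (Set.ncard_le_ncard (Set.subset_univ _) (Set.toFinite _))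
      (by simp [Set.ncard_univ])
  obtain ⟨m, hm, hms⟩ := Nat.sSup_mem hne hbdd
  exact ⟨m, hm, fun n hn => hms ▸ le_csSup hbdd ⟨n, hn, rfl⟩⟩

section Pswap

variable (P : Set V) (a b : V → V)

/-- Replace `a` by `b` on the set `P`. -/
noncomputable def pswap : V → V := fun y => if y ∈ P then b y else a y

variable {P a b}

lemma pswap_apply_mem {y : V} (hy : y ∈ P) : pswap P a b y = b y := if_pos hy

lemma pswap_apply_not_mem {y : V} (hy : y ∉ P) : pswap P a b y = a y := if_neg hy

lemma not_mem_of_inv_closed (ha : Function.Involutive a) (hPa : ∀ y ∈ P, a y ∈ P)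
    {y : V} (hy : y ∉ P) : a y ∉ P := fun h => hy (by rw [← ha y]; exact hPa _ h)

lemma pswap_involutive (ha : Function.Involutive a) (hb : Function.Involutive b)
    (hPa : ∀ y ∈ P, a y ∈ P) (hPb : ∀ y ∈ P, b y ∈ P) :
    Function.Involutive (pswap P a b) := by
  intro y
  by_cases hy : y ∈ P
  · rw [pswap_apply_mem hy, pswap_apply_mem (hPb y hy), hb]
  · rw [pswap_apply_not_mem hy, pswap_apply_not_mem (not_mem_of_inv_closed ha hPa hy), ha]

lemma pswap_isIM {H : SimpleGraph V} (ha : Function.Involutive a) (hb : Function.Involutive b)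
    (hPa : ∀ y ∈ P, a y ∈ P) (hPb : ∀ y ∈ P, b y ∈ P)
    (hbe : ∀ y ∈ P, b y ≠ y → H.Adj y (b y)) (hae : ∀ y ∉ P, a y ≠ y → H.Adj y (a y)) :
    IsIM H (pswap P a b) := by
  refine ⟨pswap_involutive ha hb hPa hPb, fun v hv => ?_⟩
  by_cases hy : v ∈ P
  · rw [pswap_apply_mem hy] at *
    exact hbe v hy hv
  · rw [pswap_apply_not_mem hy] at *
    exact hae v hy hv

lemma pswap_msupp : msupp (pswap P a b) = (msupp b ∩ P) ∪ (msupp a \ P) := by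
  ext y
  by_cases hy : y ∈ P
  · simp [mem_msupp, pswap_apply_mem hy, hy]
  · simp [mem_msupp, pswap_apply_not_mem hy, hy]

lemma pswap_scard [Fintype V] :
    scard (pswap P a b) + (msupp a ∩ P).ncard = scard a + (msupp b ∩ P).ncard := by
  have h1 : scard (pswap P a b) = (msupp b ∩ P).ncard + (msupp a \ P).ncard := by
    rw [scard, pswap_msupp]
    exact Set.ncard_union_eq (Set.disjoint_left.2 (fun x hx h => h.2 hx.2))
      (Set.toFinite _) (Set.toFinite _)
  have h2 : scard a = (msupp a ∩ P).ncard + (msupp a \ P).ncard := by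
    rw [scard, ← Set.ncard_inter_add_ncard_diff_eq_ncard (msupp a) P (Set.toFinite _)]
  omega

end Pswap

section Aug

/-- Augment a matching with the edge `u w`. -/
noncomputable def aug (m : V → V) (u w : V) : V → V :=
  fun x => if x = u then w else if x = w then u else m x

variable {m : V → V} {u w : V}

lemma aug_isIM {G : SimpleGraph V} (hm : IsIM G m) (hu : m u = u) (hw : m w = w)
    (huw : G.Adj u w) : IsIM G (aug m u w) := by
  have hne : u ≠ w := huw.ne
  constructor
  · intro x
    by_cases hxu : x = u
    · subst hxu; simp [aug, hne.symm, hne]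
    by_cases hxw : x = w
    · subst hxw; simp [aug, hne.symm, hne]
    have h1 : m x ≠ u := fun h => hxu (by rw [← hm.1 x, h, hu])
    have h2 : m x ≠ w := fun h => hxw (by rw [← hm.1 x, h, hw])
    simp [aug, hxu, hxw, h1, h2, hm.1 x]
  · intro x hx
    by_cases hxu : x = u
    · subst hxu; simpa [aug, hne] using huw
    by_cases hxw : x = w
    · subst hxw; simpa [aug, if_neg hxu, hne.symm] using huw.symm
    simp only [aug, if_neg hxu, if_neg hxw] at hx ⊢
    exact hm.2 x hx

lemma aug_msupp (hm : Function.Involutive m) (hu : m u = u) (hw : m w = w) (hne : u ≠ w) :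
    msupp (aug m u w) = msupp m ∪ {u, w} := by
  ext x
  by_cases hxu : x = u
  · subst hxu
    simp only [mem_msupp, aug, if_pos rfl, Set.mem_union, Set.mem_insert_iff,
      Set.mem_singleton_iff]
    tauto
  by_cases hxw : x = w
  · subst hxw
    simp only [mem_msupp, aug, if_neg hxu, if_pos rfl, Set.mem_union, Set.mem_insert_iff,
      Set.mem_singleton_iff]
    tauto
  · have h1 : m x ≠ u := fun h => hxu (by rw [← hm x, h, hu])
    have h2 : m x ≠ w := fun h => hxw (by rw [← hm x, h, hw])
    simp [mem_msupp, aug, hxu, hxw]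

lemma aug_scard [Fintype V] (hm : Function.Involutive m) (hu : m u = u) (hw : m w = w)
    (hne : u ≠ w) : scard (aug m u w) = scard m + 2 := by
  have hd : Disjoint (msupp m) {u, w} := by
    rw [Set.disjoint_left]
    rintro x hx (rfl | hx2)
    · exact hx hu
    · rw [Set.mem_singleton_iff] at hx2; subst hx2; exact hx hw
  rw [scard, aug_msupp hm hu hw hne,
    Set.ncard_union_eq hd (Set.toFinite _) (Set.toFinite _), Set.ncard_pair hne]
  rfl
end Aug

section Zigzag

variable {a b : V → V} {v : V}

/-- The alternating walk starting at `v`: first an `a`-step, then `b`, `a`, ... -/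
def zz (a b : V → V) (v : V) : ℕ → V
  | 0 => v
  | n + 1 => if Even n then a (zz a b v n) else b (zz a b v n)

lemma zz_zero : zz a b v 0 = v := rfl

lemma zz_succ_even {n : ℕ} (hn : Even n) : zz a b v (n + 1) = a (zz a b v n) := by
  simp [zz, hn]

lemma zz_succ_odd {n : ℕ} (hn : ¬Even n) : zz a b v (n + 1) = b (zz a b v n) := by
  simp [zz, hn]

lemma zz_repeat (ha : Function.Involutive a) (hb : Function.Involutive b) (hbv : b v = v) :
    ∀ j i, i < j → zz a b v i = zz a b v j → ∃ l, l < j ∧ zz a b v (l + 1) = zz a b v l := by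
  intro j
  induction j using Nat.strong_induction_on with
  | _ j ih =>
    intro i hij h
    by_cases hp : (Even i ↔ Even j)
    · rcases i with _ | i'
      · -- i = 0
        have hje : Even j := hp.mp (by simp)
        have hjo : ¬Even (j - 1) := by
          rw [Nat.even_iff] at hje ⊢; omega
        have hj' : j - 1 + 1 = j := by omega
        have hstep : zz a b v (j - 1 + 1) = b (zz a b v (j - 1)) := zz_succ_odd hjo
        rw [hj'] at hstep
        have hjv : zz a b v j = v := by rw [← h, zz_zero]
        have hval : zz a b v (j - 1) = v := by
          have h2 := congrArg b hstep
          rw [hb _] at h2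
          rw [← h2, hjv, hbv]
        refine ⟨j - 1, by omega, ?_⟩
        rw [hj', hjv, hval]
      · -- i = i' + 1
        rcases j with _ | j'
        · omega
        have hp' : Even i' ↔ Even j' := by
          simp only [Nat.even_iff] at hp ⊢
          omega
        have e1 : zz a b v i' = zz a b v j' := by
          by_cases he : Even i'
          · have hej : Even j' := hp'.mp he
            have := congrArg a h
            rwa [zz_succ_even he, zz_succ_even hej, ha _, ha _] at this
          · have hej : ¬Even j' := fun hc => he (hp'.mpr hc)
            have := congrArg b h
            rwa [zz_succ_odd he, zz_succ_odd hej, hb _, hb _] at this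
        obtain ⟨l, hl, hs⟩ := ih j' (by omega) i' (by omega) e1
        exact ⟨l, by omega, hs⟩
    · by_cases hj1 : j = i + 1
      · exact ⟨i, by omega, by rw [hj1] at h; exact h.symm⟩
      · have hp2 : ¬(i % 2 = 0 ↔ j % 2 = 0) := by
          rw [Nat.even_iff, Nat.even_iff] at hp; exact hp
        have hj3 : i + 3 ≤ j := by omega
        have hpar : Even (j - 1) ↔ Even i := by
          rw [Nat.even_iff, Nat.even_iff]; omega
        have hj' : j - 1 + 1 = j := by omega
        have e1 : zz a b v (i + 1) = zz a b v (j - 1) := by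
          by_cases he : Even i
          · have hej : Even (j - 1) := hpar.mpr he
            have h2 : zz a b v (j - 1 + 1) = a (zz a b v (j - 1)) := zz_succ_even hej
            rw [hj'] at h2
            calc zz a b v (i + 1) = a (zz a b v i) := zz_succ_even he
              _ = a (zz a b v j) := by rw [h]
              _ = zz a b v (j - 1) := by rw [h2, ha _]
          · have hej : ¬Even (j - 1) := fun hc => he (hpar.mp hc)
            have h2 : zz a b v (j - 1 + 1) = b (zz a b v (j - 1)) := zz_succ_odd hej
            rw [hj'] at h2
            calc zz a b v (i + 1) = b (zz a b v i) := zz_succ_odd he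
              _ = b (zz a b v j) := by rw [h]
              _ = zz a b v (j - 1) := by rw [h2, hb _]
        obtain ⟨l, hl, hs⟩ := ih (j - 1) (by omega) (i + 1) (by omega) e1
        exact ⟨l, by omega, hs⟩

lemma zz_stuck [Finite V] (ha : Function.Involutive a) (hb : Function.Involutive b)
    (hbv : b v = v) : ∃ l, zz a b v (l + 1) = zz a b v l := by
  obtain ⟨i, j, hne, h⟩ := Finite.exists_ne_map_eq_of_infinite (zz a b v)
  rcases Nat.lt_or_ge i j with hij | hij
  · obtain ⟨l, _, hs⟩ := zz_repeat ha hb hbv j i hij h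
    exact ⟨l, hs⟩
  · have hji : j < i := by omega
    obtain ⟨l, _, hs⟩ := zz_repeat ha hb hbv i j hji h.symm
    exact ⟨l, hs⟩

/-- The master zigzag lemma: the alternating path from an `a`-covered, `b`-missed vertex. -/
lemma zigzag_main [Fintype V] (ha : Function.Involutive a) (hb : Function.Involutive b)
    (hbv : b v = v) (hav : a v ≠ v) :
    ∃ (e : V) (P : Set V), v ∈ P ∧ e ∈ P ∧ v ≠ e ∧
      (∀ y ∈ P, a y ∈ P) ∧ (∀ y ∈ P, b y ∈ P) ∧
      (((∀ y ∈ P, (a y = y ↔ y = e)) ∧ (∀ y ∈ P, (b y = y ↔ y = v)) ∧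
        (msupp a ∩ P).ncard = (msupp b ∩ P).ncard) ∨
       ((∀ y ∈ P, a y ≠ y) ∧ (∀ y ∈ P, (b y = y ↔ (y = v ∨ y = e))) ∧
        (msupp a ∩ P).ncard = (msupp b ∩ P).ncard + 2)) := by
  classical
  have hex := zz_stuck (v := v) ha hb hbv
  set K := Nat.find hex with hKdef
  have hK : zz a b v (K + 1) = zz a b v K := Nat.find_spec hex
  have hmin : ∀ l, l < K → zz a b v (l + 1) ≠ zz a b v l := fun l hl => Nat.find_min hex hl
  have hKpos : 0 < K := by
    rcases Nat.eq_zero_or_pos K with h0 | h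
    · exfalso
      apply hav
      have h1 := hK
      rw [h0, zz_succ_even (by simp), zz_zero] at h1
      exact h1
    · exact h
  have hinj : Set.InjOn (zz a b v) (Set.Iic K) := by
    intro i hi j hj hij
    simp only [Set.mem_Iic] at hi hj
    by_contra hne
    rcases Nat.lt_or_ge i j with h1 | h1
    · obtain ⟨l, hl, hs⟩ := zz_repeat ha hb hbv j i h1 hij
      exact hmin l (by omega) hs
    · have h2 : j < i := by omega
      obtain ⟨l, hl, hs⟩ := zz_repeat ha hb hbv i j h2 hij.symm
      exact hmin l (by omega) hs
  set P := zz a b v '' Set.Iic K with hP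
  have hafix : ∀ i ≤ K, (a (zz a b v i) = zz a b v i ↔ (i = K ∧ Even K)) := by
    intro i hiK
    constructor
    · intro hfix
      by_cases he : Even i
      · have hst : zz a b v (i + 1) = zz a b v i := by rw [zz_succ_even he]; exact hfix
        have hiK' : i = K := by
          by_contra hne
          exact hmin i (by omega) hst
        exact ⟨hiK', hiK' ▸ he⟩
      · have hi1 : 1 ≤ i := by rw [Nat.even_iff] at he; omega
        have hie : Even (i - 1) := by rw [Nat.even_iff] at he ⊢; omega
        have hstep : zz a b v (i - 1 + 1) = a (zz a b v (i - 1)) := zz_succ_even hie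
        rw [show i - 1 + 1 = i by omega] at hstep
        have h3 : a (zz a b v i) = zz a b v (i - 1) := by rw [hstep, ha]
        exfalso
        apply hmin (i - 1) (by omega)
        rw [show i - 1 + 1 = i by omega, ← h3]
        exact hfix.symm
    · rintro ⟨rfl, hke⟩
      have h1 := hK
      rwa [zz_succ_even hke] at h1
  have hbfix : ∀ i ≤ K, (b (zz a b v i) = zz a b v i ↔ (i = 0 ∨ (i = K ∧ ¬Even K))) := by
    intro i hiK
    constructor
    · intro hfix
      by_cases he : Even i
      · rcases Nat.eq_zero_or_pos i with h0 | hpos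
        · exact Or.inl h0
        · exfalso
          have hio : ¬Even (i - 1) := by rw [Nat.even_iff] at he ⊢; omega
          have hstep : zz a b v (i - 1 + 1) = b (zz a b v (i - 1)) := zz_succ_odd hio
          rw [show i - 1 + 1 = i by omega] at hstep
          have h3 : b (zz a b v i) = zz a b v (i - 1) := by rw [hstep, hb]
          apply hmin (i - 1) (by omega)
          rw [show i - 1 + 1 = i by omega, ← h3]
          exact hfix.symm
      · have hst : zz a b v (i + 1) = zz a b v i := by rw [zz_succ_odd he]; exact hfix
        have hiK' : i = K := by
          by_contra hne
          exact hmin i (by omega) hst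
        exact Or.inr ⟨hiK', hiK' ▸ he⟩
    · rintro (rfl | ⟨rfl, hko⟩)
      · rw [zz_zero]; exact hbv
      · have h1 := hK
        rwa [zz_succ_odd hko] at h1
  have haP : ∀ y ∈ P, a y ∈ P := by
    rintro y ⟨i, hi, rfl⟩
    simp only [Set.mem_Iic] at hi
    by_cases he : Even i
    · rcases Nat.lt_or_ge i K with hiK | hiK
      · exact ⟨i + 1, by simp only [Set.mem_Iic]; omega, zz_succ_even he⟩
      · have hik : i = K := by omega
        rw [(hafix i hi).mpr ⟨hik, by rwa [hik] at he⟩]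
        exact ⟨i, Set.mem_Iic.mpr hi, rfl⟩
    · have hi1 : 1 ≤ i := by rw [Nat.even_iff] at he; omega
      have hie : Even (i - 1) := by rw [Nat.even_iff] at he ⊢; omega
      have hstep : zz a b v (i - 1 + 1) = a (zz a b v (i - 1)) := zz_succ_even hie
      rw [show i - 1 + 1 = i by omega] at hstep
      have h2 : a (zz a b v i) = zz a b v (i - 1) := by rw [hstep, ha]
      rw [h2]
      exact ⟨i - 1, by simp only [Set.mem_Iic]; omega, rfl⟩
  have hbP : ∀ y ∈ P, b y ∈ P := by
    rintro y ⟨i, hi, rfl⟩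
    simp only [Set.mem_Iic] at hi
    by_cases he : Even i
    · rcases Nat.eq_zero_or_pos i with h0 | hpos
      · subst h0
        rw [zz_zero, hbv]
        exact ⟨0, by simp, rfl⟩
      · have hio : ¬Even (i - 1) := by rw [Nat.even_iff] at he ⊢; omega
        have hstep : zz a b v (i - 1 + 1) = b (zz a b v (i - 1)) := zz_succ_odd hio
        rw [show i - 1 + 1 = i by omega] at hstep
        have h2 : b (zz a b v i) = zz a b v (i - 1) := by rw [hstep, hb]
        rw [h2]
        exact ⟨i - 1, by simp only [Set.mem_Iic]; omega, rfl⟩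
    · rcases Nat.lt_or_ge i K with hiK | hiK
      · exact ⟨i + 1, by simp only [Set.mem_Iic]; omega, zz_succ_odd he⟩
      · have hik : i = K := by omega
        rw [(hbfix i hi).mpr (Or.inr ⟨hik, by rw [hik] at he; exact he⟩)]
        exact ⟨i, Set.mem_Iic.mpr hi, rfl⟩
  have hvP : v ∈ P := ⟨0, by simp only [Set.mem_Iic]; omega, rfl⟩
  have heP : zz a b v K ∈ P := ⟨K, by simp, rfl⟩
  have hvne : v ≠ zz a b v K := by
    intro hc
    have h0 : zz a b v 0 = zz a b v K := by rw [zz_zero]; exact hc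
    have := hinj (Set.mem_Iic.mpr (Nat.zero_le K)) (Set.mem_Iic.mpr le_rfl) h0
    omega
  have hafix' : ∀ y ∈ P, (a y = y ↔ (y = zz a b v K ∧ Even K)) := by
    rintro y ⟨i, hi, rfl⟩
    simp only [Set.mem_Iic] at hi
    rw [hafix i hi]
    constructor
    · rintro ⟨rfl, h2⟩
      exact ⟨rfl, h2⟩
    · rintro ⟨h1, h2⟩
      exact ⟨hinj (Set.mem_Iic.mpr hi) (Set.mem_Iic.mpr le_rfl) h1, h2⟩
  have hbfix' : ∀ y ∈ P, (b y = y ↔ (y = v ∨ (y = zz a b v K ∧ ¬Even K))) := by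
    rintro y ⟨i, hi, rfl⟩
    simp only [Set.mem_Iic] at hi
    rw [hbfix i hi]
    constructor
    · rintro (rfl | ⟨rfl, h2⟩)
      · exact Or.inl rfl
      · exact Or.inr ⟨rfl, h2⟩
    · rintro (h1 | ⟨h1, h2⟩)
      · refine Or.inl (hinj (Set.mem_Iic.mpr hi) (Set.mem_Iic.mpr (Nat.zero_le K)) ?_)
        rw [h1, zz_zero]
      · exact Or.inr ⟨hinj (Set.mem_Iic.mpr hi) (Set.mem_Iic.mpr le_rfl) h1, h2⟩
  have hPcard : P.ncard = K + 1 := by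
    rw [hP, Set.ncard_image_of_injOn hinj]
    rw [show (Set.Iic K : Set ℕ) = ↑(Finset.Iic K) by ext n; simp]
    rw [Set.ncard_coe_finset, Nat.card_Iic]
  refine ⟨zz a b v K, P, hvP, heP, hvne, haP, hbP, ?_⟩
  by_cases hKe : Even K
  · left
    have ha2 : ∀ y ∈ P, (a y = y ↔ y = zz a b v K) := by
      intro y hy
      rw [hafix' y hy]
      tauto
    have hb2 : ∀ y ∈ P, (b y = y ↔ y = v) := by
      intro y hy
      rw [hbfix' y hy]
      tauto
    refine ⟨ha2, hb2, ?_⟩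
    have e1 : msupp a ∩ P = P \ {zz a b v K} := by
      ext y
      simp only [Set.mem_inter_iff, mem_msupp, Set.mem_diff, Set.mem_singleton_iff]
      constructor
      · rintro ⟨h1, h2⟩
        exact ⟨h2, fun hc => h1 ((ha2 y h2).mpr hc)⟩
      · rintro ⟨h1, h2⟩
        exact ⟨fun hc => h2 ((ha2 y h1).mp hc), h1⟩
    have e2 : msupp b ∩ P = P \ {v} := by
      ext y
      simp only [Set.mem_inter_iff, mem_msupp, Set.mem_diff, Set.mem_singleton_iff]
      constructor
      · rintro ⟨h1, h2⟩
        exact ⟨h2, fun hc => h1 ((hb2 y h2).mpr hc)⟩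
      · rintro ⟨h1, h2⟩
        exact ⟨fun hc => h2 ((hb2 y h1).mp hc), h1⟩
    rw [e1, e2, Set.ncard_diff (by simpa using heP), Set.ncard_diff (by simpa using hvP)]
    simp [Set.ncard_singleton]
  · right
    have ha2 : ∀ y ∈ P, a y ≠ y := by
      intro y hy hc
      exact hKe ((hafix' y hy).mp hc).2
    have hb2 : ∀ y ∈ P, (b y = y ↔ (y = v ∨ y = zz a b v K)) := by
      intro y hy
      rw [hbfix' y hy]
      tauto
    refine ⟨ha2, hb2, ?_⟩
    have e1 : msupp a ∩ P = P := by
      apply Set.eq_of_subset_of_subset Set.inter_subset_right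
      intro y hy
      exact ⟨ha2 y hy, hy⟩
    have e2 : msupp b ∩ P = P \ {v, zz a b v K} := by
      ext y
      simp only [Set.mem_inter_iff, mem_msupp, Set.mem_diff, Set.mem_insert_iff,
        Set.mem_singleton_iff]
      constructor
      · rintro ⟨h1, h2⟩
        refine ⟨h2, ?_⟩
        push_neg
        constructor
        · intro hc; exact h1 ((hb2 y h2).mpr (Or.inl hc))
        · intro hc; exact h1 ((hb2 y h2).mpr (Or.inr hc))
      · rintro ⟨h1, h2⟩
        push_neg at h2
        refine ⟨fun hc => ?_, h1⟩
        rcases (hb2 y h1).mp hc with hd | hd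
        · exact h2.1 hd
        · exact h2.2 hd
    have hsub : ({v, zz a b v K} : Set V) ⊆ P := by
      rintro y (rfl | hy)
      · exact hvP
      · rw [Set.mem_singleton_iff] at hy; subst hy; exact heP
    rw [e1, e2, Set.ncard_diff hsub, Set.ncard_pair hvne, hPcard]
    omega

end Zigzag

section Stability

variable [Fintype V] {G : SimpleGraph V}

lemma maxIM_no_aug {m : V → V} (hm : MaxIM G m) {u w : V} (hu : m u = u) (hw : m w = w)
    (hadj : G.Adj u w) : False := by
  have h1 := hm.2 (aug m u w) (aug_isIM hm.1 hu hw hadj)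
  rw [aug_scard hm.1.1 hu hw hadj.ne] at h1
  omega

lemma isIM_of_gdel {a : V} {p : V → V} (hp : IsIM (Gdel G a) p) : IsIM G p ∧ p a = a := by
  refine ⟨hp.mono Gres_le, ?_⟩
  by_contra hc
  exact (hp.2 a hc).2.1 rfl

lemma maxIM_covers {a : V} (ha : a ∉ Dv G) {M : V → V} (hM : MaxIM G M) : M a ≠ a :=
  fun hc => ha ⟨M, hM, hc⟩

/-- Every matching of `G - a` is at least two short of maximum when `a` is essential. -/
lemma gdel_scard_le {a : V} (ha : a ∉ Dv G) {M : V → V} (hM : MaxIM G M)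
    {p : V → V} (hp : IsIM (Gdel G a) p) : scard p + 2 ≤ scard M := by
  obtain ⟨hpG, hpa⟩ := isIM_of_gdel hp
  have h1 : scard p ≤ scard M := hM.2 p hpG
  have h2 : scard p ≠ scard M := by
    intro he
    exact ha ⟨p, ⟨hpG, fun n hn => he ▸ hM.2 n hn⟩, hpa⟩
  obtain ⟨c, hc⟩ := scard_even hpG.1
  obtain ⟨d, hd⟩ := scard_even hM.1.1
  omega

/-- Key construction: removing the matched edge at `a` from a maximum matching missing `v`
gives a maximum matching of `G - a` missing `v`. -/
lemma dv_subset_dv_gdel {a : V} (ha : a ∉ Dv G) : Dv G ⊆ Dv (Gdel G a) := by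
  intro v hv
  obtain ⟨M, hM, hMv⟩ := hv
  have hMa : M a ≠ a := maxIM_covers ha hM
  set P : Set V := {a, M a} with hPdef
  have haP : a ∈ P := Or.inl rfl
  have hMaP : M a ∈ P := Or.inr rfl
  have hPa : ∀ y ∈ P, M y ∈ P := by
    rintro y (rfl | hy)
    · exact Or.inr rfl
    · rw [Set.mem_singleton_iff] at hy; subst hy
      rw [hM.1.1]; exact Or.inl rfl
  have hPb : ∀ y ∈ P, id y ∈ P := fun y hy => hy
  set M₁ := pswap P M id with hM₁
  have hIM : IsIM (Gdel G a) M₁ := by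
    apply pswap_isIM hM.1.1 (fun _ => rfl) hPa hPb
    · intro y _ hy; exact absurd rfl hy
    · intro y hy hne
      refine ⟨hM.1.2 y hne, ?_, ?_⟩
      · intro hc; exact hy (hc ▸ haP)
      · intro hc
        apply hy
        have : y = M a := by rw [← hM.1.1 y, hc]
        exact this ▸ hMaP
  have hsupp : msupp M ∩ P = P := by
    apply Set.eq_of_subset_of_subset Set.inter_subset_right
    rintro y (rfl | hy)
    · exact ⟨hMa, haP⟩
    · rw [Set.mem_singleton_iff] at hy; subst hy
      exact ⟨msupp_mem_of_inv hM.1.1 hMa, hMaP⟩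
  have hid : msupp (id : V → V) ∩ P = ∅ := by
    ext y; simp [mem_msupp]
  have hPcard : P.ncard = 2 := Set.ncard_pair (Ne.symm hMa)
  have hscard : scard M₁ + 2 = scard M := by
    have := pswap_scard (P := P) (a := M) (b := id)
    rwa [hsupp, hid, hPcard, Set.ncard_empty, Nat.add_zero] at this
  have hM₁v : M₁ v = v := by
    have hvP : v ∉ P := by
      rintro (rfl | hy)
      · exact ha ⟨M, hM, hMv⟩
      · rw [Set.mem_singleton_iff] at hy
        subst hy
        rw [hM.1.1] at hMv
        exact hMa hMv.symm
    rw [hM₁, pswap_apply_not_mem hvP, hMv]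
  refine ⟨M₁, ⟨hIM, ?_⟩, hM₁v⟩
  intro p hp
  have := gdel_scard_le ha hM hp
  omega

lemma dv_gdel_subset {av u : V} (hav : av ∉ Dv G) (hu : u ∈ Dv G) (hadj : G.Adj u av) :
    Dv (Gdel G av) ⊆ Dv G ∪ {av} := by
  intro v hv
  by_cases hvav : v = av
  · exact Or.inr hvav
  left
  obtain ⟨N, hN, hNv⟩ := hv
  obtain ⟨hNG, hNav⟩ := isIM_of_gdel hN.1
  obtain ⟨M, hM, hMu⟩ := hu
  by_cases hMv : M v = v
  · exact ⟨M, hM, hMv⟩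
  obtain ⟨e, P, hvP, heP, hvne, haP, hbP, hcase⟩ :=
    zigzag_main hM.1.1 hNG.1 hNv hMv
  have hpsIM : IsIM G (pswap P M N) := by
    apply pswap_isIM hM.1.1 hNG.1 haP hbP
    · intro y _ hy; exact hNG.2 y hy
    · intro y _ hy; exact hM.1.2 y hy
  rcases hcase with ⟨_, _, hcnt⟩ | ⟨hane, hbfix2, hcnt⟩
  · -- even case : swap gives a maximum matching of G missing v
    have hscard : scard (pswap P M N) = scard M := by
      have := pswap_scard (P := P) (a := M) (b := N)
      omega
    refine ⟨pswap P M N, ⟨hpsIM, fun n hn => hscard ▸ hM.2 n hn⟩, ?_⟩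
    rw [pswap_apply_mem hvP, hNv]
  · -- odd case
    have hscard : scard (pswap P M N) + 2 = scard M := by
      have := pswap_scard (P := P) (a := M) (b := N)
      omega
    by_cases hePav : e = av
    · -- the alternating path ends at av; extend through the edge av-u
      have huP : u ∉ P := fun hc => hane u hc hMu
      have hm'av : pswap P M N av = av := by
        rw [← hePav] at *
        rw [pswap_apply_mem heP]
        exact (hbfix2 e heP).mpr (Or.inr rfl)
      have hm'u : pswap P M N u = u := by rw [pswap_apply_not_mem huP, hMu]
      have havu : G.Adj av u := hadj.symm
      have hIM2 : IsIM G (aug (pswap P M N) av u) := aug_isIM hpsIM hm'av hm'u havu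
      have hsc2 : scard (aug (pswap P M N) av u) = scard M := by
        rw [aug_scard (pswap_involutive hM.1.1 hNG.1 haP hbP) hm'av hm'u havu.ne]
        omega
      refine ⟨aug (pswap P M N) av u, ⟨hIM2, fun n hn => hsc2 ▸ hM.2 n hn⟩, ?_⟩
      have hvu : v ≠ u := fun hc => hMv (hc ▸ hMu)
      have hvav' : v ≠ av := hvav
      simp only [aug, if_neg hvav', if_neg hvu]
      rw [pswap_apply_mem hvP, hNv]
    · -- the path avoids av; swapping the other way contradicts maximality in G - av
      exfalso
      have havP : av ∉ P := by
        intro hc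
        rcases (hbfix2 av hc).mp hNav with h1 | h1
        · exact hvav h1.symm
        · exact hePav h1.symm
      have hN'IM : IsIM (Gdel G av) (pswap P N M) := by
        apply pswap_isIM hNG.1 hM.1.1 hbP haP
        · intro y hy hne
          refine ⟨hM.1.2 y hne, fun hc => havP (hc ▸ hy), fun hc => havP (hc ▸ haP y hy)⟩
        · intro y _ hy; exact hN.1.2 y hy
      have hsc3 : scard (pswap P N M) = scard N + 2 := by
        have := pswap_scard (P := P) (a := N) (b := M)
        omega
      have := hN.2 (pswap P N M) hN'IM
      omega

lemma dv_gdel_eq {av u : V} (hav : av ∉ Dv G) (hu : u ∈ Dv G) (hadj : G.Adj u av) :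
    Dv (Gdel G av) = Dv G ∪ {av} := by
  apply Set.eq_of_subset_of_subset (dv_gdel_subset hav hu hadj)
  rintro v (hv | hv)
  · exact dv_subset_dv_gdel hav hv
  · rw [Set.mem_singleton_iff] at hv
    subst hv
    obtain ⟨m, hm⟩ := exists_maxIM (Gdel G v)
    exact ⟨m, hm, (isIM_of_gdel hm.1).2⟩

lemma gres_gdel_eq {av : V} (hav : av ∉ Dv G) :
    Gres (Gdel G av) (Dv G ∪ {av}) = Gres G (Dv G) := by
  ext x y
  simp only [Gres_adj, Gdel_adj, Set.mem_union, Set.mem_singleton_iff]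
  constructor
  · rintro ⟨⟨h1, h2, h3⟩, h4, h5⟩
    exact ⟨h1, h4.resolve_right h2, h5.resolve_right h3⟩
  · rintro ⟨h1, h2, h3⟩
    exact ⟨⟨h1, fun hc => hav (hc ▸ h2), fun hc => hav (hc ▸ h3)⟩, Or.inl h2, Or.inl h3⟩

end Stability

section Walks

variable {G : SimpleGraph V} {s : Set V}

lemma reachable_gres_of_closed (hs : ∀ x ∈ s, ∀ y, G.Adj x y → y ∈ s) :
    ∀ {u w : V}, G.Walk u w → u ∈ s → (Gres G s).Reachable u w := by
  intro u w p
  induction p with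
  | nil => exact fun _ => ⟨SimpleGraph.Walk.nil⟩
  | cons h q ih =>
    rename_i x y z
    intro hx
    have hy : y ∈ s := hs x hx y h
    have hGadj : (Gres G s).Adj x y := ⟨h, hx, hy⟩
    exact hGadj.reachable.trans (ih hy)

lemma mem_of_gres_walk : ∀ {u w : V}, (Gres G s).Walk u w → u ∈ s → w ∈ s := by
  intro u w p
  induction p with
  | nil => exact id
  | cons h q ih => exact fun _ => ih h.2.2

lemma mem_closed_of_walk (hs : ∀ x ∈ s, ∀ y, G.Adj x y → y ∈ s) :
    ∀ {u w : V}, G.Walk u w → u ∈ s → w ∈ s := by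
  intro u w p
  induction p with
  | nil => exact id
  | cons h q ih =>
    rename_i x y z
    exact fun hx => ih (hs x hx y h)

end Walks

section Gallai

variable [Fintype V]

/-- Gallai's lemma, key step: in a graph where every vertex of a connected, adjacency-closed
set `C` is missed by some maximum matching, a maximum matching cannot miss two vertices
of `C`. -/
lemma gallai_key (H : SimpleGraph V) (C : Set V)
    (hadj : ∀ x ∈ C, ∀ y, H.Adj x y → y ∈ C)
    (hconn : ∀ x ∈ C, ∀ y ∈ C, H.Reachable x y)
    (hins : ∀ w ∈ C, ∃ m, MaxIM H m ∧ m w = w) :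
    ∀ m u w, MaxIM H m → u ∈ C → w ∈ C → m u = u → m w = w → u = w := by
  by_contra hcon
  push_neg at hcon
  set S : Set ℕ :=
    {n | ∃ m u w, MaxIM H m ∧ u ∈ C ∧ w ∈ C ∧ m u = u ∧ m w = w ∧ u ≠ w ∧ H.dist u w = n}
    with hSdef
  have hSne : S.Nonempty := by
    obtain ⟨m, u, w, h1, h2, h3, h4, h5, h6⟩ := hcon
    exact ⟨H.dist u w, m, u, w, h1, h2, h3, h4, h5, h6, rfl⟩
  set d := sInf S with hd
  obtain ⟨m, u, w, hm, hu, hw, hmu, hmw, huw, hdist⟩ := Nat.sInf_mem hSne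
  have hmind : ∀ n ∈ S, d ≤ n := fun n hn => Nat.sInf_le hn
  have hreach : H.Reachable u w := hconn u hu w hw
  have hdpos : 0 < d := by rw [hd, ← hdist]; exact hreach.pos_dist_of_ne huw
  obtain ⟨p, hp⟩ := hreach.exists_walk_length_eq_dist
  rw [hdist] at hp
  have hd2 : 2 ≤ d := by
    rcases Nat.lt_or_ge d 2 with hlt | hge
    · exfalso
      have hd1 : d = 1 := by omega
      -- walk of length 1 gives adjacency
      cases p with
      | nil => rw [SimpleGraph.Walk.length_nil] at hp; omega
      | cons h q =>
        rename_i t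
        rw [SimpleGraph.Walk.length_cons] at hp
        have hq0 : q.length = 0 := by omega
        have htw : t = w := q.eq_of_length_eq_zero hq0
        subst htw
        exact maxIM_no_aug hm hmu hmw h
    · exact hge
  cases p with
  | nil => rw [SimpleGraph.Walk.length_nil] at hp; omega
  | cons h q =>
    rename_i t
    rw [SimpleGraph.Walk.length_cons] at hp
    have htC : t ∈ C := hadj u hu t h
    have hut : u ≠ t := h.ne
    have hdut : H.dist u t ≤ 1 := by
      have := SimpleGraph.dist_le (SimpleGraph.Walk.cons h SimpleGraph.Walk.nil)
      simpa using this
    have htw : t ≠ w := by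
      intro hc
      subst hc
      omega
    have hdtw : H.dist t w ≤ d - 1 := by
      have := SimpleGraph.dist_le q
      omega
    obtain ⟨N, hN, hNt⟩ := hins t htC
    have hNu : N u ≠ u := by
      intro hc
      have : H.dist u t ∈ S := ⟨N, u, t, hN, hu, htC, hc, hNt, hut, rfl⟩
      have := hmind _ this
      omega
    obtain ⟨e, P, huP, heP, hune, haP, hbP, hcase⟩ := zigzag_main hN.1.1 hm.1.1 hmu hNu
    have hswapIM : IsIM H (pswap P m N) := by
      apply pswap_isIM hm.1.1 hN.1.1 hbP haP
      · intro y _ hy; exact hN.1.2 y hy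
      · intro y _ hy; exact hm.1.2 y hy
    rcases hcase with ⟨hafix2, hbfix2, hcnt⟩ | ⟨hane, hbfix2, hcnt⟩
    · -- even case
      by_cases het : e = t
      · -- new pair (t, w) at smaller distance
        have hsc : scard (pswap P m N) = scard m := by
          have := pswap_scard (P := P) (a := m) (b := N)
          omega
        have hmax : MaxIM H (pswap P m N) := ⟨hswapIM, fun n hn => hsc ▸ hm.2 n hn⟩
        have hmt : pswap P m N t = t := by
          rw [← het, pswap_apply_mem heP]
          exact (hafix2 e heP).mpr rfl
        have hwP : w ∉ P := by
          intro hc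
          exact huw ((hbfix2 w hc).mp hmw).symm
        have hmw' : pswap P m N w = w := by rw [pswap_apply_not_mem hwP, hmw]
        have : H.dist t w ∈ S := ⟨pswap P m N, t, w, hmax, htC, hw, hmt, hmw', htw, rfl⟩
        have := hmind _ this
        omega
      · -- new pair (u, t) at distance 1
        have hsc : scard (pswap P N m) = scard N := by
          have := pswap_scard (P := P) (a := N) (b := m)
          omega
        have hN'IM : IsIM H (pswap P N m) := by
          apply pswap_isIM hN.1.1 hm.1.1 haP hbP
          · intro y _ hy; exact hm.1.2 y hy
          · intro y _ hy; exact hN.1.2 y hy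
        have hmax : MaxIM H (pswap P N m) := ⟨hN'IM, fun n hn => hsc ▸ hN.2 n hn⟩
        have hN'u : pswap P N m u = u := by rw [pswap_apply_mem huP, hmu]
        have htP : t ∉ P := by
          intro hc
          exact het ((hafix2 t hc).mp hNt).symm
        have hN't : pswap P N m t = t := by rw [pswap_apply_not_mem htP, hNt]
        have : H.dist u t ∈ S := ⟨pswap P N m, u, t, hmax, hu, htC, hN'u, hN't, hut, rfl⟩
        have := hmind _ this
        omega
    · -- odd case: augmenting path for m, contradiction
      have hsc : scard (pswap P m N) = scard m + 2 := by
        have := pswap_scard (P := P) (a := m) (b := N)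
        omega
      have := hm.2 (pswap P m N) hswapIM
      omega

/-- Gallai's lemma: factor-criticality. -/
lemma gallai_fc (H : SimpleGraph V) (C : Set V)
    (hadj : ∀ x ∈ C, ∀ y, H.Adj x y → y ∈ C)
    (hconn : ∀ x ∈ C, ∀ y ∈ C, H.Reachable x y)
    (hins : ∀ w ∈ C, ∃ m, MaxIM H m ∧ m w = w)
    (hedge : ∀ x y, H.Adj x y → x ∈ C)
    {v : V} (hv : v ∈ C) :
    ∃ m, IsIM H m ∧ msupp m = C \ {v} := by
  obtain ⟨m, hm, hmv⟩ := hins v hv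
  refine ⟨m, hm.1, ?_⟩
  apply Set.eq_of_subset_of_subset
  · intro x hx
    refine ⟨hedge x (m x) (hm.1.2 x hx), ?_⟩
    intro hc
    rw [Set.mem_singleton_iff] at hc
    subst hc
    exact hx hmv
  · rintro x ⟨hxC, hxv⟩
    rw [Set.mem_singleton_iff] at hxv
    intro hc
    exact hxv (gallai_key H C hadj hconn hins m x v hm hxC hv hc hmv)

end Gallai

section Main

variable [Fintype V]

theorem mainIM_aux :
    ∀ n : ℕ, ∀ G : SimpleGraph V, G.edgeSet.ncard ≤ n → ∀ v : V, v ∈ Dv G →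
      ∃ m, IsIM (Gres G (Dv G)) m ∧
        msupp m = {w | (Gres G (Dv G)).Reachable v w} \ {v} := by
  intro n
  induction n using Nat.strong_induction_on with
  | _ n ih =>
    intro G hGn v hv
    by_cases hA : ∃ av, av ∉ Dv G ∧ ∃ u ∈ Dv G, G.Adj u av
    · -- delete an essential vertex adjacent to D and use induction
      obtain ⟨av, hav, u, hu, hadj⟩ := hA
      have hss : (Gdel G av).edgeSet ⊂ G.edgeSet := by
        constructor
        · exact SimpleGraph.edgeSet_mono Gres_le
        · intro hsub
          have h1 : s(u, av) ∈ G.edgeSet := G.mem_edgeSet.mpr hadj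
          have h2 := hsub h1
          rw [SimpleGraph.mem_edgeSet] at h2
          exact h2.2.2 rfl
      have hlt : (Gdel G av).edgeSet.ncard < n :=
        lt_of_lt_of_le (Set.ncard_lt_ncard hss (Set.toFinite _)) hGn
      have hv' : v ∈ Dv (Gdel G av) := dv_subset_dv_gdel hav hv
      obtain ⟨m, hm1, hm2⟩ := ih _ hlt (Gdel G av) le_rfl v hv'
      have hDv : Dv (Gdel G av) = Dv G ∪ {av} := dv_gdel_eq hav hu hadj
      have hGres : Gres (Gdel G av) (Dv (Gdel G av)) = Gres G (Dv G) := by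
        rw [hDv]; exact gres_gdel_eq hav
      rw [hGres] at hm1 hm2
      exact ⟨m, hm1, hm2⟩
    · -- no essential vertex is adjacent to D : D is closed under adjacency
      push_neg at hA
      have hclosed : ∀ x ∈ Dv G, ∀ y, G.Adj x y → y ∈ Dv G := by
        intro x hx y hxy
        by_contra hy
        exact hA y hy x hx hxy
      set C : Set V := {w | G.Reachable v w} with hCdef
      have hvC : v ∈ C := ⟨SimpleGraph.Walk.nil⟩
      have hCclosed : ∀ x ∈ C, ∀ y, G.Adj x y → y ∈ C :=
        fun x hx y hxy => hx.trans hxy.reachable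
      have hCD : C ⊆ Dv G := by
        intro w hw
        obtain ⟨p⟩ := (hw : G.Reachable v w)
        exact mem_closed_of_walk hclosed p hv
      have hCmaps : ∀ {M : V → V}, IsIM G M → ∀ y ∈ C, M y ∈ C := by
        intro M hM y hy
        by_cases hMy : M y = y
        · rwa [hMy]
        · exact hCclosed y hy (M y) (hM.2 y hMy)
      -- every vertex of C is inessential in Gres G C
      have hins : ∀ w ∈ C, ∃ m, MaxIM (Gres G C) m ∧ m w = w := by
        intro w hw
        obtain ⟨M, hM, hMw⟩ := hCD hw
        set r := pswap C id M with hrdef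
        have hrIM : IsIM (Gres G C) r := by
          apply pswap_isIM (isIM_id G).1 hM.1.1 (fun y hy => hy) (hCmaps hM.1)
          · intro y hy hne
            exact ⟨hM.1.2 y hne, hy, hCmaps hM.1 y hy⟩
          · intro y _ hy
            exact absurd rfl hy
        have hrsupp : msupp r = msupp M ∩ C := by
          rw [hrdef, pswap_msupp]
          have : msupp (id : V → V) = (∅ : Set V) := by ext y; simp [mem_msupp]
          rw [this]
          simp
        have hrw : r w = w := by rw [hrdef, pswap_apply_mem hw, hMw]
        refine ⟨r, ⟨hrIM, ?_⟩, hrw⟩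
        intro p hp
        -- p is a matching of Gres G C; combine with M outside C
        have hpsupp : msupp p ⊆ C := fun x hx => (hp.2 x hx).2.1
        have hpmaps : ∀ y ∈ C, p y ∈ C := by
          intro y hy
          by_cases hpy : p y = y
          · rwa [hpy]
          · exact (hp.2 y hpy).2.2
        have hqIM : IsIM G (pswap C M p) := by
          apply pswap_isIM hM.1.1 hp.1 (hCmaps hM.1) hpmaps
          · intro y _ hy
            exact (hp.2 y hy).1
          · intro y _ hy
            exact hM.1.2 y hy
        have hq := hM.2 _ hqIM
        have hqs := pswap_scard (P := C) (a := M) (b := p)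
        have hps : msupp p ∩ C = msupp p := Set.inter_eq_self_of_subset_left hpsupp
        rw [hps] at hqs
        have h5 : scard r = (msupp M ∩ C).ncard := congrArg Set.ncard hrsupp
        have h6 : scard p = (msupp p).ncard := rfl
        omega
      -- apply Gallai's lemma
      have hconn : ∀ x ∈ C, ∀ y ∈ C, (Gres G C).Reachable x y := by
        intro x hx y hy
        obtain ⟨p⟩ := (hx : G.Reachable v x).symm.trans (hy : G.Reachable v y)
        exact reachable_gres_of_closed hCclosed p hx
      have hadjC : ∀ x ∈ C, ∀ y, (Gres G C).Adj x y → y ∈ C := fun x _ y h => h.2.2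
      have hedgeC : ∀ x y, (Gres G C).Adj x y → x ∈ C := fun x y h => h.2.1
      obtain ⟨m, hmIM, hmsupp⟩ := gallai_fc (Gres G C) C hadjC hconn hins hedgeC hvC
      refine ⟨m, ⟨hmIM.1, ?_⟩, ?_⟩
      · intro x hx
        obtain ⟨h1, h2, h3⟩ := hmIM.2 x hx
        exact ⟨h1, hCD h2, hCD h3⟩
      · rw [hmsupp]
        congr 1
        apply Set.eq_of_subset_of_subset
        · intro w hw
          obtain ⟨p⟩ := (hw : G.Reachable v w)
          exact reachable_gres_of_closed hclosed p hv
        · intro w hw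
          exact (hw : (Gres G (Dv G)).Reachable v w).mono Gres_le

end Main

section Correspondence

variable {G : SimpleGraph V}

/-- Turn an involution matching into a subgraph matching. -/
def imSubgraph (m : V → V) (hm : IsIM G m) : G.Subgraph where
  verts := msupp m
  Adj x y := m x = y ∧ x ≠ y
  adj_sub := by
    rintro x y ⟨h1, h2⟩
    have hne : m x ≠ x := fun hc => h2 (h1.symm.trans hc).symm
    have := hm.2 x hne
    rwa [h1] at this
  edge_vert := by
    rintro x y ⟨h1, h2⟩
    exact fun hc => h2 (by rw [← h1, hc])
  symm := by
    constructor
    rintro x y ⟨h1, h2⟩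
    exact ⟨by rw [← h1, hm.1 x], h2.symm⟩

lemma imSubgraph_isMatching {m : V → V} (hm : IsIM G m) :
    (imSubgraph m hm).IsMatching := by
  intro x hx
  refine ⟨m x, ⟨rfl, fun hc => hx hc.symm⟩, ?_⟩
  rintro y ⟨h1, _⟩
  exact h1.symm

lemma imSubgraph_support {m : V → V} (hm : IsIM G m) :
    (imSubgraph m hm).support = msupp m := by
  ext x
  rw [SimpleGraph.Subgraph.mem_support]
  constructor
  · rintro ⟨y, h1, h2⟩
    exact fun hc => h2 (by rw [← h1, hc])
  · intro hx
    exact ⟨m x, rfl, fun hc => hx hc.symm⟩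

/-- Turn a subgraph matching into an involution. -/
noncomputable def subIM (M : G.Subgraph) : V → V := fun x =>
  if h : x ∈ M.support then (M.mem_support.mp h).choose else x

lemma subIM_adj {M : G.Subgraph} {x : V} (h : x ∈ M.support) : M.Adj x (subIM M x) := by
  rw [subIM, dif_pos h]
  exact (M.mem_support.mp h).choose_spec

lemma subIM_not_mem {M : G.Subgraph} {x : V} (h : x ∉ M.support) : subIM M x = x := by
  rw [subIM, dif_neg h]

lemma subIM_isIM {M : G.Subgraph} (hM : M.IsMatching) : IsIM G (subIM M) := by
  constructor
  · intro x
    by_cases hx : x ∈ M.support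
    · have h1 : M.Adj x (subIM M x) := subIM_adj hx
      have h2 : subIM M x ∈ M.support := M.mem_support.mpr ⟨x, h1.symm⟩
      have h3 : M.Adj (subIM M x) (subIM M (subIM M x)) := subIM_adj h2
      have h4 := hM (M.edge_vert h1.symm)
      exact h4.unique h3 h1.symm
    · rw [subIM_not_mem hx, subIM_not_mem hx]
  · intro x hx
    by_cases h : x ∈ M.support
    · exact M.adj_sub (subIM_adj h)
    · exact absurd (subIM_not_mem h) hx

lemma subIM_msupp {M : G.Subgraph} (hM : M.IsMatching) : msupp (subIM M) = M.support := by
  ext x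
  constructor
  · intro hx
    by_contra h
    exact hx (subIM_not_mem h)
  · intro hx
    exact (M.adj_sub (subIM_adj hx)).ne.symm

lemma dset_eq_dv [Fintype V] (G : SimpleGraph V) : Dset G = Dv G := by
  ext v
  constructor
  · rintro ⟨M, ⟨hmatch, hmax⟩, hvsup⟩
    refine ⟨subIM M, ⟨subIM_isIM hmatch, ?_⟩, subIM_not_mem hvsup⟩
    intro p hp
    have h1 := hmax (imSubgraph p hp) (imSubgraph_isMatching hp)
    rw [imSubgraph_support hp] at h1
    show (msupp p).ncard ≤ (msupp (subIM M)).ncard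
    rw [subIM_msupp hmatch]
    exact h1
  · rintro ⟨m, hm, hmv⟩
    refine ⟨imSubgraph m hm.1, ⟨imSubgraph_isMatching hm.1, ?_⟩, ?_⟩
    · intro N hN
      have h1 : (msupp (subIM N)).ncard ≤ (msupp m).ncard := hm.2 (subIM N) (subIM_isIM hN)
      rw [subIM_msupp hN] at h1
      rw [imSubgraph_support hm.1]
      exact h1
    · rw [imSubgraph_support hm.1]
      exact fun hc => hc hmv

end Correspondence

section Translate

variable {G : SimpleGraph V} {D : Set V}

lemma induce_walk_to_gres : ∀ {x y : ↥D}, (G.induce D).Walk x y →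
    (Gres G D).Reachable ↑x ↑y := by
  intro x y p
  induction p with
  | nil => exact ⟨SimpleGraph.Walk.nil⟩
  | cons h q ih =>
    rename_i a b c
    have hadj : (Gres G D).Adj ↑a ↑b := ⟨h, a.2, b.2⟩
    exact hadj.reachable.trans ih

lemma gres_walk_to_induce : ∀ {x y : V}, (Gres G D).Walk x y →
    ∀ (hx : x ∈ D) (hy : y ∈ D), (G.induce D).Reachable ⟨x, hx⟩ ⟨y, hy⟩ := by
  intro x y p
  induction p with
  | nil =>
    rename_i u
    intro hx hy
    have h : (⟨u, hx⟩ : ↥D) = ⟨u, hy⟩ := Subtype.ext rfl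
    rw [h]
  | cons h q ih =>
    rename_i a b c
    intro hx hy
    have hb : b ∈ D := h.2.2
    have hadj : (G.induce D).Adj ⟨a, hx⟩ ⟨b, hb⟩ := h.1
    exact hadj.reachable.trans (ih hb hy)

end Translate

end GE

theorem stmt7 {V : Type*} [Fintype V] (G : SimpleGraph V)
    (c : (G.induce (Dset G)).ConnectedComponent)
    (v : Dset G) (hv : (G.induce (Dset G)).connectedComponentMk v = c) :
    ∃ M : (SimpleGraph.induce
        {w : Dset G | (G.induce (Dset G)).connectedComponentMk w = c ∧ w ≠ v}
        (G.induce (Dset G))).Subgraph,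
      M.IsPerfectMatching := by
  classical
  have hDv : Dset G = GE.Dv G := GE.dset_eq_dv G
  have hvD : (v : V) ∈ GE.Dv G := hDv ▸ v.2
  obtain ⟨m, hmIM, hmsupp⟩ := GE.mainIM_aux G.edgeSet.ncard G le_rfl v.val hvD
  rw [← hDv] at hmIM hmsupp
  set S : Set ↥(Dset G) :=
    {w : Dset G | (G.induce (Dset G)).connectedComponentMk w = c ∧ w ≠ v} with hS
  -- every vertex of S is covered by m
  have key1 : ∀ x : ↥(Dset G), x ∈ S → m ↑x ≠ ↑x := by
    intro x hx
    have hreach : (G.induce (Dset G)).Reachable x v :=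
      (SimpleGraph.ConnectedComponent.eq).mp (hx.1.trans hv.symm)
    obtain ⟨p⟩ := hreach
    have h1 : (GE.Gres G (Dset G)).Reachable ↑x ↑v := GE.induce_walk_to_gres p
    have h2 : (↑x : V) ≠ ↑v := fun hc => hx.2 (Subtype.ext hc)
    have h3 : (↑x : V) ∈ GE.msupp m := by
      rw [hmsupp]
      exact ⟨h1.symm, h2⟩
    exact h3
  -- the partner of a vertex of S is in S
  have key2 : ∀ x : ↥(Dset G), x ∈ S → ∃ hyD : m ↑x ∈ Dset G,
      (G.induce (Dset G)).connectedComponentMk ⟨m ↑x, hyD⟩ = c ∧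
      (⟨m ↑x, hyD⟩ : ↥(Dset G)) ≠ v := by
    intro x hx
    have hmx := key1 x hx
    have hadj : (GE.Gres G (Dset G)).Adj ↑x (m ↑x) := hmIM.2 ↑x hmx
    have hyD : m ↑x ∈ Dset G := hadj.2.2
    refine ⟨hyD, ?_, ?_⟩
    · have hy : m ↑x ∈ GE.msupp m := GE.msupp_mem_of_inv hmIM.1 hmx
      rw [hmsupp] at hy
      obtain ⟨p⟩ := hy.1
      have h4 := GE.gres_walk_to_induce p v.2 hyD
      have h5 : (⟨↑v, v.2⟩ : ↥(Dset G)) = v := Subtype.ext rfl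
      rw [h5] at h4
      exact (SimpleGraph.ConnectedComponent.sound h4.symm).trans hv
    · intro hc
      have : m ↑x = ↑v := congrArg Subtype.val hc
      have hy : m ↑x ∈ GE.msupp m := GE.msupp_mem_of_inv hmIM.1 hmx
      rw [hmsupp] at hy
      exact hy.2 (by rw [this]; rfl)
  let MM : (SimpleGraph.induce S (G.induce (Dset G))).Subgraph :=
    { verts := Set.univ
      Adj := fun x y => m ↑↑x = ↑↑y ∧ (↑↑x : V) ≠ ↑↑y
      adj_sub := by
        rintro x y ⟨h1, h2⟩
        have hadj : (GE.Gres G (Dset G)).Adj ↑↑x (m ↑↑x) := hmIM.2 ↑↑x (key1 ↑x x.2)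
        show G.Adj ↑↑x ↑↑y
        rw [← h1]
        exact hadj.1
      edge_vert := fun _ => Set.mem_univ _
      symm := by
        constructor
        rintro x y ⟨h1, h2⟩
        exact ⟨by rw [← h1]; exact hmIM.1 _, h2.symm⟩ }
  refine ⟨MM, ?_, fun x => Set.mem_univ x⟩
  intro x _
  have hmx := key1 ↑x x.2
  obtain ⟨hyD, hyc, hyv⟩ := key2 ↑x x.2
  refine ⟨⟨⟨m ↑↑x, hyD⟩, ⟨hyc, hyv⟩⟩, ⟨rfl, fun hc => hmx hc.symm⟩, ?_⟩
  rintro w ⟨hw1, _⟩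
  apply Subtype.ext
  apply Subtype.ext
  exact hw1.symm
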